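/- arXiv:2207.14705 — 3 statements merged into one kernel-verified Lean document; each statement's English description precedes it below -/
import Mathlib

section
/- Carnap categoricity of IPC on nuclear frames: Let (X, ≤) be a poset with nucleus j on its upsets, and let I be an assignment of operations on j-fixed upsets to the connectives ⊥, ∧, ∨, → such that for every intuitionistic consequence Γ ⊢_IPC φ and every valuation v of atoms as upsets (with atoms evaluated by applying j), the intersection of the values of Γ is contained in the value of φ. Then I(⊥) = j(∅), I(∧)(U,V) = U ∩ V, I(∨)(U,V) = j(U ∪ V), and I(→)(U,V) = {x : ↑x ∩ U ⊆ V}. -/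
/-- Formulas of intuitionistic propositional logic over atoms ℕ. -/
inductive Form : Type where
  | atom : ℕ → Form
  | bot  : Form
  | and  : Form → Form → Form
  | or   : Form → Form → Form
  | imp  : Form → Form → Form

/-- Intuitionistic propositional consequence (natural deduction). -/
inductive IPC : Set Form → Form → Prop where
  | ax    {Γ : Set Form} {φ : Form} : φ ∈ Γ → IPC Γ φ
  | botE  {Γ : Set Form} {φ : Form} : IPC Γ Form.bot → IPC Γ φ
  | andI  {Γ : Set Form} {φ ψ : Form} : IPC Γ φ → IPC Γ ψ → IPC Γ (Form.and φ ψ)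
  | andE1 {Γ : Set Form} {φ ψ : Form} : IPC Γ (Form.and φ ψ) → IPC Γ φ
  | andE2 {Γ : Set Form} {φ ψ : Form} : IPC Γ (Form.and φ ψ) → IPC Γ ψ
  | orI1  {Γ : Set Form} {φ ψ : Form} : IPC Γ φ → IPC Γ (Form.or φ ψ)
  | orI2  {Γ : Set Form} {φ ψ : Form} : IPC Γ ψ → IPC Γ (Form.or φ ψ)
  | orE   {Γ : Set Form} {φ ψ χ : Form} : IPC Γ (Form.or φ ψ) →
      IPC (insert φ Γ) χ → IPC (insert ψ Γ) χ → IPC Γ χ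
  | impI  {Γ : Set Form} {φ ψ : Form} : IPC (insert φ Γ) ψ → IPC Γ (Form.imp φ ψ)
  | impE  {Γ : Set Form} {φ ψ : Form} : IPC Γ (Form.imp φ ψ) → IPC Γ φ → IPC Γ ψ

/-- Compositional semantic value of a formula under a nuclear interpretation:
atoms are evaluated by applying the nucleus j to their value. -/
def eval {X : Type*} (j : Set X → Set X) (Ibot : Set X)
    (Iand Ior Iimp : Set X → Set X → Set X) (v : ℕ → Set X) : Form → Set X
  | Form.atom p => j (v p)
  | Form.bot => Ibot
  | Form.and φ ψ => Iand (eval j Ibot Iand Ior Iimp v φ) (eval j Ibot Iand Ior Iimp v ψ)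
  | Form.or φ ψ => Ior (eval j Ibot Iand Ior Iimp v φ) (eval j Ibot Iand Ior Iimp v ψ)
  | Form.imp φ ψ => Iimp (eval j Ibot Iand Ior Iimp v φ) (eval j Ibot Iand Ior Iimp v ψ)

/-- Carnap categoricity of IPC on nuclear frames: any nuclear interpretation
consistent with ⊢_IPC is the standard one. -/
theorem carnap_categoricity_IPC {X : Type*} [PartialOrder X] (j : Set X → Set X)
    -- j is a nucleus on the upsets of (X, ≤)
    (hjup : ∀ U : Set X, IsUpperSet U → IsUpperSet (j U))
    (hinf : ∀ U : Set X, IsUpperSet U → U ⊆ j U)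
    (hidem : ∀ U : Set X, IsUpperSet U → j (j U) = j U)
    (hmul : ∀ U V : Set X, IsUpperSet U → IsUpperSet V → j (U ∩ V) = j U ∩ j V)
    -- the interpretation I of the connectives: operations on j-fixed upsets
    (Ibot : Set X) (Iand Ior Iimp : Set X → Set X → Set X)
    (hIbot : IsUpperSet Ibot ∧ j Ibot = Ibot)
    (hIand : ∀ U V : Set X, IsUpperSet U → j U = U → IsUpperSet V → j V = V →
      IsUpperSet (Iand U V) ∧ j (Iand U V) = Iand U V)
    (hIor : ∀ U V : Set X, IsUpperSet U → j U = U → IsUpperSet V → j V = V →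
      IsUpperSet (Ior U V) ∧ j (Ior U V) = Ior U V)
    (hIimp : ∀ U V : Set X, IsUpperSet U → j U = U → IsUpperSet V → j V = V →
      IsUpperSet (Iimp U V) ∧ j (Iimp U V) = Iimp U V)
    -- consistency of I with ⊢_IPC
    (hcons : ∀ (Γ : Set Form) (φ : Form), IPC Γ φ →
      ∀ v : ℕ → Set X, (∀ p, IsUpperSet (v p)) →
        ⋂₀ (eval j Ibot Iand Ior Iimp v '' Γ) ⊆ eval j Ibot Iand Ior Iimp v φ) :
    -- conclusion: I is the standard nuclear interpretation
    Ibot = j ∅ ∧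
    (∀ U V : Set X, IsUpperSet U → j U = U → IsUpperSet V → j V = V →
      Iand U V = U ∩ V) ∧
    (∀ U V : Set X, IsUpperSet U → j U = U → IsUpperSet V → j V = V →
      Ior U V = j (U ∪ V)) ∧
    (∀ U V : Set X, IsUpperSet U → j U = U → IsUpperSet V → j V = V →
      Iimp U V = {x : X | {y : X | x ≤ y} ∩ U ⊆ V}) := by
  -- monotonicity of j on upper sets
  have hmono : ∀ A B : Set X, IsUpperSet A → IsUpperSet B → A ⊆ B → j A ⊆ j B := by
    intro A B hA hB hAB
    have h := hmul A B hA hB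
    rw [Set.inter_eq_self_of_subset_left hAB] at h
    rw [h]; exact Set.inter_subset_right
  -- ⊥
  have hbot : Ibot = j ∅ := by
    apply Set.Subset.antisymm
    · have d : IPC {Form.bot} (Form.atom 0) := IPC.botE (IPC.ax rfl)
      have h := hcons _ _ d (fun _ => ∅) (fun _ => isUpperSet_empty)
      simpa [eval] using h
    · have := hmono ∅ Ibot isUpperSet_empty hIbot.1 (Set.empty_subset _)
      rwa [hIbot.2] at this
  -- ∧
  have hand : ∀ U V : Set X, IsUpperSet U → j U = U → IsUpperSet V → j V = V →
      Iand U V = U ∩ V := by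
    intro U V hU hUj hV hVj
    set v : ℕ → Set X := fun n => if n = 0 then U else V with hv
    have hvup : ∀ p, IsUpperSet (v p) := by
      intro p; simp only [hv]; split <;> assumption
    apply Set.Subset.antisymm
    · apply Set.subset_inter
      · have d : IPC {Form.and (Form.atom 0) (Form.atom 1)} (Form.atom 0) :=
          IPC.andE1 (IPC.ax rfl)
        have h := hcons _ _ d v hvup
        simpa [eval, hv, hUj, hVj] using h
      · have d : IPC {Form.and (Form.atom 0) (Form.atom 1)} (Form.atom 1) :=
          IPC.andE2 (IPC.ax rfl)
        have h := hcons _ _ d v hvup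
        simpa [eval, hv, hUj, hVj] using h
    · have d : IPC {Form.atom 0, Form.atom 1} (Form.and (Form.atom 0) (Form.atom 1)) :=
        IPC.andI (IPC.ax (by simp)) (IPC.ax (by simp))
      have h := hcons _ _ d v hvup
      simpa [eval, hv, hUj, hVj, Set.image_insert_eq] using h
  -- top lemma: Iimp A B = univ when A ⊆ B
  have htop : ∀ A B : Set X, IsUpperSet A → j A = A → IsUpperSet B → j B = B →
      A ⊆ B → Iimp A B = Set.univ := by
    intro A B hA hAj hB hBj hAB
    have d : IPC ∅ (Form.imp (Form.and (Form.atom 0) (Form.atom 1)) (Form.atom 0)) := by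
      apply IPC.impI
      apply IPC.andE1 (ψ := Form.atom 1)
      exact IPC.ax (Set.mem_insert _ _)
    set v : ℕ → Set X := fun n => if n = 0 then B else A with hv
    have hvup : ∀ p, IsUpperSet (v p) := by
      intro p; simp only [hv]; split <;> assumption
    have h := hcons _ _ d v hvup
    simp [eval, hv, hAj, hBj] at h
    rw [hand B A hB hBj hA hAj, Set.inter_eq_self_of_subset_right hAB] at h
    exact h
  -- →
  have himp : ∀ U V : Set X, IsUpperSet U → j U = U → IsUpperSet V → j V = V →
      Iimp U V = {x : X | {y : X | x ≤ y} ∩ U ⊆ V} := by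
    intro U V hU hUj hV hVj
    set W : Set X := {x : X | {y : X | x ≤ y} ∩ U ⊆ V} with hW
    have hWup : IsUpperSet W := by
      intro a b hab ha y hy
      exact ha ⟨le_trans hab hy.1, hy.2⟩
    have hWU : W ∩ U ⊆ V := by
      rintro x ⟨hxW, hxU⟩
      exact hxW ⟨le_refl x, hxU⟩
    have hWUup : IsUpperSet (W ∩ U) := hWup.inter hU
    have hWj : j W = W := by
      apply Set.Subset.antisymm
      · intro x hx y hy
        have hyW : y ∈ j W := hjup W hWup hy.1 hx
        have hmem : y ∈ j W ∩ j U := ⟨hyW, hUj ▸ hinf U hU hy.2⟩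
        rw [← hmul W U hWup hU] at hmem
        have := hmono (W ∩ U) V hWUup hV hWU hmem
        rwa [hVj] at this
      · exact hinf W hWup
    have hWUj : j (W ∩ U) = W ∩ U := by
      rw [hmul W U hWup hU, hWj, hUj]
    apply Set.Subset.antisymm
    · -- modus ponens direction
      have d : IPC {Form.atom 0, Form.imp (Form.atom 0) (Form.atom 1)} (Form.atom 1) := by
        apply IPC.impE (φ := Form.atom 0)
        · exact IPC.ax (by simp)
        · exact IPC.ax (by simp)
      set v : ℕ → Set X := fun n => if n = 0 then U else V with hv
      have hvup : ∀ p, IsUpperSet (v p) := by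
        intro p; simp only [hv]; split <;> assumption
      have h := hcons _ _ d v hvup
      simp [eval, hv, hUj, hVj, Set.image_insert_eq] at h
      -- h : U ∩ Iimp U V ⊆ V
      intro x hx y hy
      have hyI : y ∈ Iimp U V := (hIimp U V hU hUj hV hVj).1 hy.1 hx
      exact h ⟨hy.2, hyI⟩
    · -- conditional proof direction
      have d : IPC {Form.atom 2}
          (Form.imp (Form.atom 0) (Form.and (Form.atom 2) (Form.atom 0))) :=
        IPC.impI (IPC.andI (IPC.ax (by simp)) (IPC.ax (by simp)))
      set v : ℕ → Set X := fun n => if n = 0 then U else if n = 2 then W else V with hv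
      have hvup : ∀ p, IsUpperSet (v p) := by
        intro p; simp only [hv]; split
        · exact hU
        · split
          · exact hWup
          · exact hV
      have h := hcons _ _ d v hvup
      simp [eval, hv, hUj, hWj] at h
      -- h : W ⊆ Iimp U (Iand W U)
      rw [hand W U hWup hWj hU hUj] at h
      have d2 : IPC {Form.imp (Form.atom 0) (Form.atom 1),
          Form.imp (Form.atom 1) (Form.atom 2)}
          (Form.imp (Form.atom 0) (Form.atom 2)) := by
        apply IPC.impI
        apply IPC.impE (φ := Form.atom 1)
        · exact IPC.ax (by simp)
        · apply IPC.impE (φ := Form.atom 0)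
          · exact IPC.ax (by simp)
          · exact IPC.ax (by simp)
      set v2 : ℕ → Set X := fun n => if n = 0 then U else if n = 1 then W ∩ U else V
        with hv2
      have hv2up : ∀ p, IsUpperSet (v2 p) := by
        intro p; simp only [hv2]; split
        · exact hU
        · split
          · exact hWUup
          · exact hV
      have h2 := hcons _ _ d2 v2 hv2up
      simp [eval, hv2, hUj, hVj, hWUj, Set.image_insert_eq] at h2
      -- h2 : Iimp U (W ∩ U) ∩ Iimp (W ∩ U) V ⊆ Iimp U V
      rw [htop (W ∩ U) V hWUup hWUj hV hVj hWU] at h2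
      intro x hx
      exact h2 ⟨h hx, Set.mem_univ x⟩
  -- ∨
  have hor : ∀ U V : Set X, IsUpperSet U → j U = U → IsUpperSet V → j V = V →
      Ior U V = j (U ∪ V) := by
    intro U V hU hUj hV hVj
    have hUVup : IsUpperSet (U ∪ V) := hU.union hV
    have hRj : j (j (U ∪ V)) = j (U ∪ V) := hidem _ hUVup
    have hRup : IsUpperSet (j (U ∪ V)) := hjup _ hUVup
    set v : ℕ → Set X := fun n => if n = 0 then U else if n = 1 then V else U ∪ V with hv
    have hvup : ∀ p, IsUpperSet (v p) := by
      intro p; simp only [hv]; split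
      · exact hU
      · split
        · exact hV
        · exact hUVup
    apply Set.Subset.antisymm
    · have d : IPC {Form.or (Form.atom 0) (Form.atom 1),
          Form.imp (Form.atom 0) (Form.atom 2), Form.imp (Form.atom 1) (Form.atom 2)}
          (Form.atom 2) := by
        apply IPC.orE (φ := Form.atom 0) (ψ := Form.atom 1)
        · exact IPC.ax (by simp)
        · apply IPC.impE (φ := Form.atom 0)
          · exact IPC.ax (by simp)
          · exact IPC.ax (by simp)
        · apply IPC.impE (φ := Form.atom 1)
          · exact IPC.ax (by simp)
          · exact IPC.ax (by simp)
      have h := hcons _ _ d v hvup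
      simp [eval, hv, hUj, hVj, Set.image_insert_eq] at h
      rw [htop U (j (U ∪ V)) hU hUj hRup hRj
          (fun x hx => hinf _ hUVup (Or.inl hx)),
        htop V (j (U ∪ V)) hV hVj hRup hRj
          (fun x hx => hinf _ hUVup (Or.inr hx))] at h
      intro x hx
      exact h ⟨hx, Set.mem_univ x, Set.mem_univ x⟩
    · have hor1 : U ⊆ Ior U V := by
        have d : IPC {Form.atom 0} (Form.or (Form.atom 0) (Form.atom 1)) :=
          IPC.orI1 (IPC.ax rfl)
        have h := hcons _ _ d v hvup
        simpa [eval, hv, hUj, hVj] using h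
      have hor2 : V ⊆ Ior U V := by
        have d : IPC {Form.atom 1} (Form.or (Form.atom 0) (Form.atom 1)) :=
          IPC.orI2 (IPC.ax rfl)
        have h := hcons _ _ d v hvup
        simpa [eval, hv, hUj, hVj] using h
      have hIorP := hIor U V hU hUj hV hVj
      have := hmono (U ∪ V) (Ior U V) hUVup hIorP.1 (Set.union_subset hor1 hor2)
      rwa [hIorP.2] at this
  exact ⟨hbot, hand, hor, himp⟩
end

section
/- Dragalin's theorem for topologies: Let X be a topological space, let F be the poset of nonempty open sets ordered by reverse inclusion, and for a downset A of nonempty opens (i.e., closed under passing to nonempty open subsets) define jA = {U nonempty open : U ⊆ ⋃A}. Then j is a dense nucleus on the upsets of F (i.e., j∅ = ∅), and the map h(U) = {V nonempty open : V ⊆ U} is an isomorphism of Heyting algebras from the open-set frame Ω(X) onto the algebra of j-fixed upsets of F. -/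
/-- `NEO U`: U is a nonempty open set. -/
def NEO {X : Type*} [TopologicalSpace X] (U : Set X) : Prop :=
  IsOpen U ∧ U.Nonempty

/-- A downset of nonempty opens (equivalently, an upset of the poset of nonempty
opens ordered by reverse inclusion): a set of nonempty opens closed under
passing to nonempty open subsets. -/
def IsDown {X : Type*} [TopologicalSpace X] (A : Set (Set X)) : Prop :=
  (∀ U ∈ A, NEO U) ∧ ∀ U V : Set X, NEO U → U ⊆ V → V ∈ A → U ∈ A

/-- Dragalin's nucleus: jA = {U nonempty open : U ⊆ ⋃ A}. -/
def jD {X : Type*} [TopologicalSpace X] (A : Set (Set X)) : Set (Set X) :=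
  {U | NEO U ∧ U ⊆ ⋃₀ A}

/-- h(U) = {V nonempty open : V ⊆ U}. -/
def hD {X : Type*} [TopologicalSpace X] (U : Set X) : Set (Set X) :=
  {V | NEO V ∧ V ⊆ U}

/-- Heyting implication in the frame of downsets of nonempty opens
(= upsets of the reverse-inclusion poset). -/
def HimpD {X : Type*} [TopologicalSpace X] (A B : Set (Set X)) : Set (Set X) :=
  {W | NEO W ∧ ∀ W' : Set X, NEO W' → W' ⊆ W → W' ∈ A → W' ∈ B}

/-- Dragalin's theorem for topologies: jD is a dense nucleus on the upsets of the
poset of nonempty opens under reverse inclusion, and hD is an isomorphism of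
Heyting algebras from the open-set frame Ω(X) onto the algebra of jD-fixed
upsets. -/
theorem dragalin {X : Type*} [TopologicalSpace X] :
    -- jD maps downsets to downsets and is a nucleus
    (∀ A : Set (Set X), IsDown A → IsDown (jD A)) ∧
    (∀ A : Set (Set X), IsDown A → A ⊆ jD A) ∧
    (∀ A : Set (Set X), IsDown A → jD (jD A) ⊆ jD A) ∧
    (∀ A B : Set (Set X), IsDown A → IsDown B → jD (A ∩ B) = jD A ∩ jD B) ∧
    -- jD is dense
    (jD (∅ : Set (Set X)) = ∅) ∧
    -- hD maps opens to jD-fixed downsets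
    (∀ U : Set X, IsOpen U → IsDown (hD U) ∧ jD (hD U) = hD U) ∧
    -- hD is a bijection from opens onto fixed downsets
    (∀ U V : Set X, IsOpen U → IsOpen V → hD U = hD V → U = V) ∧
    (∀ A : Set (Set X), IsDown A → jD A = A → ∃ U : Set X, IsOpen U ∧ hD U = A) ∧
    -- hD is an order isomorphism
    (∀ U V : Set X, IsOpen U → IsOpen V → (U ⊆ V ↔ hD U ⊆ hD V)) ∧
    -- hD preserves the Heyting operations
    (hD (∅ : Set X) = jD (∅ : Set (Set X))) ∧
    (∀ U V : Set X, IsOpen U → IsOpen V → hD (U ∩ V) = hD U ∩ hD V) ∧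
    (∀ U V : Set X, IsOpen U → IsOpen V → hD (U ∪ V) = jD (hD U ∪ hD V)) ∧
    (∀ U V : Set X, IsOpen U → IsOpen V →
      hD (interior (Uᶜ ∪ V)) = HimpD (hD U) (hD V)) := by

  refine ⟨?_, ?_, ?_, ?_, ?_, ?_, ?_, ?_, ?_, ?_, ?_, ?_, ?_⟩
  · -- jD maps downsets to downsets
    intro A _
    refine ⟨fun U hU => hU.1, fun U V hU hUV hV => ⟨hU, hUV.trans hV.2⟩⟩
  · -- A ⊆ jD A
    intro A hA U hU
    exact ⟨hA.1 U hU, fun x hx => ⟨U, hU, hx⟩⟩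
  · -- jD idempotent
    intro A _ U hU
    refine ⟨hU.1, fun x hx => ?_⟩
    obtain ⟨V, hV, hxV⟩ := hU.2 hx
    exact hV.2 hxV
  · -- jD preserves meets
    intro A B hA hB
    ext U
    constructor
    · rintro ⟨hU, hsub⟩
      exact ⟨⟨hU, fun x hx => (hsub hx).imp fun V hV => ⟨hV.1.1, hV.2⟩⟩,
             ⟨hU, fun x hx => (hsub hx).imp fun V hV => ⟨hV.1.2, hV.2⟩⟩⟩
    · rintro ⟨⟨hU, hsubA⟩, ⟨_, hsubB⟩⟩
      refine ⟨hU, fun x hx => ?_⟩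
      obtain ⟨V, hVA, hxV⟩ := hsubA hx
      obtain ⟨W, hWB, hxW⟩ := hsubB hx
      have hVo := hA.1 V hVA
      have hWo := hB.1 W hWB
      have hNEO : NEO (V ∩ W) := ⟨hVo.1.inter hWo.1, ⟨x, hxV, hxW⟩⟩
      exact ⟨V ∩ W, ⟨hA.2 _ _ hNEO Set.inter_subset_left hVA,
        hB.2 _ _ hNEO Set.inter_subset_right hWB⟩, hxV, hxW⟩
  · -- dense
    ext U
    simp only [jD, Set.sUnion_empty, Set.mem_setOf_eq, Set.mem_empty_iff_false, iff_false]
    rintro ⟨⟨_, x, hx⟩, hsub⟩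
    exact hsub hx
  · -- hD U is a jD-fixed downset
    intro U hU
    refine ⟨⟨fun V hV => hV.1, fun V W hV hVW hW => ⟨hV, hVW.trans hW.2⟩⟩, ?_⟩
    ext V
    constructor
    · rintro ⟨hV, hsub⟩
      refine ⟨hV, fun x hx => ?_⟩
      obtain ⟨W, hW, hxW⟩ := hsub hx
      exact hW.2 hxW
    · intro hV
      exact ⟨hV.1, fun x hx => ⟨V, hV, hx⟩⟩
  · -- injective
    intro U V hU hV h
    have key : ∀ (U V : Set X), IsOpen U → hD U = hD V → U ⊆ V := by
      intro U V hU h x hx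
      have : U ∈ hD V := h ▸ ⟨⟨hU, ⟨x, hx⟩⟩, subset_rfl⟩
      exact this.2 hx
    exact Set.Subset.antisymm (key U V hU h) (key V U hV h.symm)
  · -- surjective onto fixed downsets
    intro A hA hfix
    refine ⟨⋃₀ A, isOpen_sUnion fun V hV => (hA.1 V hV).1, ?_⟩
    ext V
    constructor
    · rintro ⟨hV, hsub⟩
      exact hfix ▸ (⟨hV, hsub⟩ : V ∈ jD A)
    · intro hV
      exact ⟨hA.1 V hV, fun x hx => ⟨V, hV, hx⟩⟩
  · -- order iso
    intro U V hU hV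
    constructor
    · intro h W hW
      exact ⟨hW.1, hW.2.trans h⟩
    · intro h x hx
      have : U ∈ hD V := h ⟨⟨hU, ⟨x, hx⟩⟩, subset_rfl⟩
      exact this.2 hx
  · -- bottom
    ext V
    simp only [hD, jD, Set.sUnion_empty, Set.mem_setOf_eq]
  · -- meet
    intro U V _ _
    ext W
    constructor
    · rintro ⟨hW, hsub⟩
      exact ⟨⟨hW, hsub.trans Set.inter_subset_left⟩, ⟨hW, hsub.trans Set.inter_subset_right⟩⟩
    · rintro ⟨⟨hW, h1⟩, ⟨_, h2⟩⟩
      exact ⟨hW, Set.subset_inter h1 h2⟩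
  · -- join
    intro U V hU hV
    ext W
    constructor
    · rintro ⟨hW, hsub⟩
      refine ⟨hW, fun x hx => ?_⟩
      rcases hsub hx with hxU | hxV
      · exact ⟨W ∩ U, Or.inl ⟨⟨hW.1.inter hU, ⟨x, hx, hxU⟩⟩, Set.inter_subset_right⟩, hx, hxU⟩
      · exact ⟨W ∩ V, Or.inr ⟨⟨hW.1.inter hV, ⟨x, hx, hxV⟩⟩, Set.inter_subset_right⟩, hx, hxV⟩
    · rintro ⟨hW, hsub⟩
      refine ⟨hW, fun x hx => ?_⟩
      obtain ⟨S, hS, hxS⟩ := hsub hx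
      rcases hS with hS | hS
      · exact Or.inl (hS.2 hxS)
      · exact Or.inr (hS.2 hxS)
  · -- implication
    intro U V hU hV
    ext W
    constructor
    · rintro ⟨hW, hsub⟩
      refine ⟨hW, fun W' hW' hW'W hW'U => ⟨hW', fun x hx => ?_⟩⟩
      have hx' : x ∈ Uᶜ ∪ V := interior_subset (hsub (hW'W hx))
      rcases hx' with hx' | hx'
      · exact absurd (hW'U.2 hx) hx'
      · exact hx'
    · rintro ⟨hW, himp⟩
      refine ⟨hW, ?_⟩
      have : W ⊆ Uᶜ ∪ V := by
        intro x hx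
        by_cases hxU : x ∈ U
        · have hNEO : NEO (W ∩ U) := ⟨hW.1.inter hU, ⟨x, hx, hxU⟩⟩
          have := himp (W ∩ U) hNEO Set.inter_subset_left ⟨hNEO, Set.inter_subset_right⟩
          exact Or.inr (this.2 ⟨hx, hxU⟩)
        · exact Or.inl hxU
      exact hW.1.subset_interior_iff.mpr this
end

section
/- In the nuclear frame of nonempty opens (ordered by reverse inclusion) with nucleus jA = {U : U ⊆ ⋃A}, a downset A of nonempty opens satisfies jA = A if and only if A = ∅ or A = {V nonempty open : V ⊆ U} for some nonempty open U. -/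
/-- A downset A of nonempty opens is jD-fixed iff A = ∅ or A = hD U for some
nonempty open U. -/
theorem fixed_iff {X : Type*} [TopologicalSpace X] (A : Set (Set X))
    (hA : IsDown A) :
    jD A = A ↔ A = ∅ ∨ ∃ U : Set X, NEO U ∧ A = hD U := by
  constructor
  · intro hfix
    rcases Set.eq_empty_or_nonempty A with h | ⟨W, hW⟩
    · exact Or.inl h
    · right
      refine ⟨⋃₀ A, ⟨isOpen_sUnion fun V hV => (hA.1 V hV).1,
        ((hA.1 W hW).2).mono (Set.subset_sUnion_of_mem hW)⟩, ?_⟩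
      ext V
      constructor
      · intro hV
        exact ⟨hA.1 V hV, Set.subset_sUnion_of_mem hV⟩
      · intro ⟨hV1, hV2⟩
        rw [← hfix]
        exact ⟨hV1, hV2⟩
  · rintro (rfl | ⟨U, hU, rfl⟩)
    · ext V
      simp only [jD, Set.mem_setOf_eq, Set.sUnion_empty, Set.subset_empty_iff,
        Set.mem_empty_iff_false, iff_false]
      rintro ⟨⟨_, ⟨x, hx⟩⟩, rfl⟩
      exact hx
    · have hsub : ⋃₀ hD U = U := by
        apply subset_antisymm
        · exact Set.sUnion_subset fun V hV => hV.2
        · exact Set.subset_sUnion_of_mem ⟨hU, subset_rfl⟩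
      ext V
      simp only [jD, Set.mem_setOf_eq, hsub]; rfl
end
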